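/- Let u, v, u', v', x₁, x₂, x₃ be words over an alphabet Γ such that x₂·x₃ = x₃·x₂ and x₂·x₃ ≠ ε. If u·x₁·v = u'·x₁·v' and u·x₁·x₂·x₃·v = u'·x₁·x₂·x₃·v', then u·x₁·x₂·v = u'·x₁·x₂·v'. -/

import Mathlib

private def rep {Γ : Type*} (y : List Γ) : ℕ → List Γ
  | 0 => []
  | n + 1 => y ++ rep y n

private lemma rep_length {Γ : Type*} (y : List Γ) : ∀ n, (rep y n).length = n * y.length
  | 0 => by simp [rep]
  | n + 1 => by simp [rep, rep_length y n]; ring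

private lemma rep_comm {Γ : Type*} {t y : List Γ} (h : t ++ y = y ++ t) :
    ∀ n, t ++ rep y n = rep y n ++ t
  | 0 => by simp [rep]
  | n + 1 => by
    show t ++ (y ++ rep y n) = (y ++ rep y n) ++ t
    rw [← List.append_assoc, h, List.append_assoc, rep_comm h n, List.append_assoc]

/-- A word commuting with a nonempty word is a prefix of a long enough power of it. -/
private lemma prefix_rep {Γ : Type*} {t y : List Γ} (hy : y ≠ []) (h : t ++ y = y ++ t)
    (n : ℕ) (hn : t.length ≤ n) : t <+: rep y n := by
  have hlen : t.length ≤ (rep y n).length := by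
    rw [rep_length]
    calc t.length ≤ n := hn
    _ = n * 1 := (Nat.mul_one n).symm
    _ ≤ n * y.length := Nat.mul_le_mul_left n (Nat.one_le_iff_ne_zero.2 (by simpa using hy))
  have h1 : t <+: rep y n ++ t := ⟨rep y n, rep_comm h n⟩
  exact (List.isPrefix_append_of_length hlen).1 h1

/-- Two words commuting with a common nonempty word commute with each other. -/
private lemma comm_trans {Γ : Type*} {y : List Γ} (hy : y ≠ []) :
    ∀ n (t s : List Γ), t.length + s.length ≤ n →
      t ++ y = y ++ t → s ++ y = y ++ s → t ++ s = s ++ t := by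
  intro n
  induction n with
  | zero =>
    intro t s hn ht hs
    have : t = [] := by simpa using List.eq_nil_of_length_eq_zero (by omega)
    subst this; simp
  | succ m ih =>
    have step : ∀ t s : List Γ, t.length + s.length ≤ m + 1 → t ≠ [] →
        t.length ≤ s.length → t ++ y = y ++ t → s ++ y = y ++ s → t ++ s = s ++ t := by
      intro t s hn htne hts ht hs
      have hts' : t <+: s := by
        have h1 : t <+: rep y s.length := prefix_rep hy ht s.length hts
        have h2 : s <+: rep y s.length := prefix_rep hy hs s.length le_rfl
        exact List.prefix_of_prefix_length_le h1 h2 hts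
      obtain ⟨s', rfl⟩ := hts'
      have hs' : s' ++ y = y ++ s' := by
        apply List.append_cancel_left (as := t)
        calc t ++ (s' ++ y) = t ++ s' ++ y := by rw [List.append_assoc]
          _ = y ++ (t ++ s') := hs
          _ = y ++ t ++ s' := by rw [List.append_assoc]
          _ = t ++ y ++ s' := by rw [ht]
          _ = t ++ (y ++ s') := by rw [List.append_assoc]
      have hlen : t.length + s'.length ≤ m := by
        have h0 : 0 < t.length := List.length_pos_iff.2 htne
        have := List.length_append (as := t) (bs := s')
        omega
      have := ih t s' hlen ht hs'
      rw [List.append_assoc, ← this, ← List.append_assoc]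
    intro t s hn ht hs
    rcases eq_or_ne t [] with rfl | htne
    · simp
    rcases eq_or_ne s [] with rfl | hsne
    · simp
    rcases le_total t.length s.length with hle | hle
    · exact step t s hn htne hle ht hs
    · exact (step s t (by omega) hsne hle hs ht).symm

private lemma main_aux {Γ : Type*} (u v u' v' x₁ x₂ x₃ : List Γ)
    (hcomm : x₂ ++ x₃ = x₃ ++ x₂) (hx : x₂ ++ x₃ ≠ [])
    (h₁ : u ++ x₁ ++ v = u' ++ x₁ ++ v')
    (h₃ : u ++ x₁ ++ x₂ ++ x₃ ++ v = u' ++ x₁ ++ x₂ ++ x₃ ++ v')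
    (hle : u.length ≤ u'.length) :
    u ++ x₁ ++ x₂ ++ v = u' ++ x₁ ++ x₂ ++ v' := by
  -- u is a prefix of u'
  have hpre : u <+: u' := by
    have h1 : u <+: u' ++ x₁ ++ v' := ⟨x₁ ++ v, by rw [← List.append_assoc, ← h₁]⟩
    have h2 : u' <+: u' ++ x₁ ++ v' := ⟨x₁ ++ v', by simp⟩
    exact List.prefix_of_prefix_length_le h1 h2 hle
  obtain ⟨w, rfl⟩ := hpre
  -- cancel u
  simp only [List.append_assoc, List.append_cancel_left_eq] at h₁ h₃ ⊢
  -- x₁ is a prefix of w ++ x₁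
  have hpre2 : x₁ <+: w ++ x₁ := by
    have h1 : x₁ <+: w ++ (x₁ ++ v') := ⟨v, h₁⟩
    have h2 : w ++ x₁ <+: w ++ (x₁ ++ v') := ⟨v', by simp⟩
    exact List.prefix_of_prefix_length_le h1 h2 (by simp)
  obtain ⟨t, hwx'⟩ := hpre2
  have hwx : w ++ x₁ = x₁ ++ t := hwx'.symm
  -- derive v = t ++ v'
  have hv : v = t ++ v' := by
    have : x₁ ++ v = x₁ ++ (t ++ v') := by
      rw [h₁, ← List.append_assoc, hwx, List.append_assoc]
    exact List.append_cancel_left this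
  subst hv
  -- derive commutation of t with x₂ ++ x₃
  have hzt : t ++ (x₂ ++ x₃) = (x₂ ++ x₃) ++ t := by
    have h3' : x₁ ++ (x₂ ++ (x₃ ++ (t ++ v'))) = x₁ ++ (t ++ (x₂ ++ (x₃ ++ v'))) := by
      rw [h₃, ← List.append_assoc, ← List.append_assoc, hwx]
      simp [List.append_assoc]
    have h4 := List.append_cancel_left h3'
    apply List.append_cancel_right (bs := v')
    calc t ++ (x₂ ++ x₃) ++ v' = t ++ (x₂ ++ (x₃ ++ v')) := by simp [List.append_assoc]
      _ = x₂ ++ (x₃ ++ (t ++ v')) := h4.symm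
      _ = x₂ ++ x₃ ++ t ++ v' := by simp [List.append_assoc]
  have hzx₂ : x₂ ++ (x₂ ++ x₃) = (x₂ ++ x₃) ++ x₂ := by
    rw [List.append_assoc, ← hcomm, ← List.append_assoc]
  have hcommtx₂ : t ++ x₂ = x₂ ++ t :=
    comm_trans hx (t.length + x₂.length) t x₂ le_rfl hzt hzx₂
  -- finish
  calc x₁ ++ (x₂ ++ (t ++ v')) = x₁ ++ ((x₂ ++ t) ++ v') := by simp [List.append_assoc]
    _ = x₁ ++ ((t ++ x₂) ++ v') := by rw [hcommtx₂]
    _ = (x₁ ++ t) ++ (x₂ ++ v') := by simp [List.append_assoc]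
    _ = (w ++ x₁) ++ (x₂ ++ v') := by rw [hwx']
    _ = w ++ (x₁ ++ (x₂ ++ v')) := by simp [List.append_assoc]

theorem middle_eq_of_outer_two {Γ : Type*} (u v u' v' x₁ x₂ x₃ : List Γ)
    (hcomm : x₂ ++ x₃ = x₃ ++ x₂) (hx : x₂ ++ x₃ ≠ [])
    (h₁ : u ++ x₁ ++ v = u' ++ x₁ ++ v')
    (h₃ : u ++ x₁ ++ x₂ ++ x₃ ++ v = u' ++ x₁ ++ x₂ ++ x₃ ++ v') :
    u ++ x₁ ++ x₂ ++ v = u' ++ x₁ ++ x₂ ++ v' := by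
  rcases le_total u.length u'.length with hle | hle
  · exact main_aux u v u' v' x₁ x₂ x₃ hcomm hx h₁ h₃ hle
  · exact (main_aux u' v' u v x₁ x₂ x₃ hcomm hx h₁.symm h₃.symm hle).symm
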